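/- For every ν > 0, ν·ln(1 − e^{−ν}) ≥ −(ln 2)², with equality if and only if ν = ln 2. -/

import Mathlib

open Real Set

private lemma hasDerivAt_H (x : ℝ) (hx0 : 0 < x) (hx1 : x < 1) :
    HasDerivAt (fun y : ℝ => (1 - y) * Real.log (1 - y) - y * Real.log y)
      (-(Real.log (1 - x) + 1) - (Real.log x + 1)) x := by
  have inner : HasDerivAt (fun y : ℝ => 1 - y) (-1 : ℝ) x := by
    simpa using (hasDerivAt_id x).const_sub 1
  have outer := Real.hasDerivAt_mul_log (x := 1 - x) (by linarith)
  have h1 : HasDerivAt (fun y : ℝ => (1 - y) * Real.log (1 - y))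
      (-(Real.log (1 - x) + 1)) x := by
    have := outer.comp x inner
    simpa [mul_comm, Function.comp_def] using this
  have h2 : HasDerivAt (fun y : ℝ => y * Real.log y) (Real.log x + 1) x :=
    Real.hasDerivAt_mul_log hx0.ne'
  simpa [Pi.sub_def] using h1.sub h2

private lemma Hpos (x : ℝ) (hx0 : 0 < x) (hx2 : x < 1/2) :
    0 < (1 - x) * Real.log (1 - x) - x * Real.log x := by
  have hx1 : x < 1 := by linarith
  rcases le_or_gt x (Real.exp (-1)) with hle | hlt
  · -- small x case
    have hlogx : Real.log x ≤ -1 := by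
      have := Real.log_le_log hx0 hle
      simpa [Real.log_exp] using this
    have h1 : x ≤ -(x * Real.log x) := by nlinarith
    have hne : (1:ℝ) - x ≠ 0 := by linarith
    have hpos1x : (0:ℝ) < 1 - x := by linarith
    have h2 : Real.log ((1-x)⁻¹) < (1-x)⁻¹ - 1 := by
      apply Real.log_lt_sub_one_of_pos (by positivity)
      rw [Ne, inv_eq_one]
      intro h; linarith
    have h3 : Real.log ((1-x)⁻¹) = -Real.log (1-x) := Real.log_inv _
    have h4 : (1-x)⁻¹ - 1 = x / (1-x) := by field_simp; ring
    -- -(1-x)*log(1-x) < x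
    have h5 : -((1-x) * Real.log (1-x)) < x := by
      have hpos : (0:ℝ) < 1 - x := by linarith
      rw [h3, h4] at h2
      calc -((1-x) * Real.log (1-x)) = (1-x) * (-Real.log (1-x)) := by ring
        _ < (1-x) * (x / (1-x)) := by
            apply mul_lt_mul_of_pos_left h2 hpos
        _ = x := by field_simp
    linarith
  · -- x ∈ (e⁻¹, 1/2): H strictly decreasing there, H(1/2)=0
    have hE : Real.exp (-1) < 1/2 := by
      have h2e : (2:ℝ) < Real.exp 1 := by
        have := Real.exp_one_gt_d9; linarith
      rw [Real.exp_neg, show (1:ℝ)/2 = 2⁻¹ by norm_num]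
      exact inv_strictAnti₀ two_pos h2e
    have hanti : StrictAntiOn (fun y : ℝ => (1 - y) * Real.log (1 - y) - y * Real.log y)
        (Icc (Real.exp (-1)) (1/2)) := by
      apply strictAntiOn_of_deriv_neg (convex_Icc _ _)
      · intro y hy
        have hy0 : 0 < y := lt_of_lt_of_le (Real.exp_pos _) hy.1
        have hy1 : y < 1 := by have := hy.2; linarith
        exact (hasDerivAt_H y hy0 hy1).continuousAt.continuousWithinAt
      · intro y hy
        rw [interior_Icc] at hy
        have hy0 : 0 < y := lt_trans (Real.exp_pos _) hy.1
        have hy1 : y < 1 := by have := hy.2; linarith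
        rw [(hasDerivAt_H y hy0 hy1).deriv]
        -- need log(1-y) + log y > -2, i.e. y(1-y) > e^{-2}
        have key : Real.exp (-2) < y * (1 - y) := by
          have he1 : Real.exp (-1) < y := hy.1
          have he2 : Real.exp (-1) < 1 - y := by
            have := hy.2; linarith
          have hp := Real.exp_pos (-1)
          have : Real.exp (-2) = Real.exp (-1) * Real.exp (-1) := by
            rw [← Real.exp_add]; norm_num
          rw [this]
          nlinarith
        have hlog : Real.log (Real.exp (-2)) < Real.log (y * (1-y)) :=
          Real.log_lt_log (Real.exp_pos _) key
        rw [Real.log_exp, Real.log_mul hy0.ne' (by linarith)] at hlog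
        linarith
    have h12 : Real.exp (-1) ≤ (1:ℝ)/2 := le_of_lt hE
    have := hanti ⟨le_of_lt hlt, le_of_lt hx2⟩ ⟨h12, le_refl _⟩ hx2
    simp only at this
    have hhalf : (1 - (1:ℝ)/2) * Real.log (1 - 1/2) - (1/2) * Real.log (1/2) = 0 := by
      norm_num
    rw [show (1:ℝ) - 1/2 = 1/2 by norm_num] at this
    nlinarith [this]


private lemma hasDerivAt_F (x : ℝ) (hx0 : 0 < x) (hx1 : x < 1) :
    HasDerivAt (fun y : ℝ => Real.log y * Real.log (1 - y))
      (x⁻¹ * Real.log (1 - x) + Real.log x * (-(1 - x)⁻¹)) x := by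
  have inner : HasDerivAt (fun y : ℝ => 1 - y) (-1 : ℝ) x := by
    simpa using (hasDerivAt_id x).const_sub 1
  have hlog1 : HasDerivAt Real.log x⁻¹ x := Real.hasDerivAt_log hx0.ne'
  have hlog2 : HasDerivAt (fun y : ℝ => Real.log (1 - y)) (-(1 - x)⁻¹) x := by
    have := (Real.hasDerivAt_log (x := 1 - x) (by linarith)).comp x inner
    simpa [mul_comm, Function.comp_def] using this
  simpa [Pi.mul_def] using hlog1.mul hlog2

private lemma F_lt (x : ℝ) (hx0 : 0 < x) (hx2 : x < 1/2) :
    Real.log x * Real.log (1 - x) < (Real.log 2) ^ 2 := by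
  have hmono : StrictMonoOn (fun y : ℝ => Real.log y * Real.log (1 - y))
      (Icc x (1/2)) := by
    apply strictMonoOn_of_deriv_pos (convex_Icc _ _)
    · intro y hy
      have hy0 : 0 < y := lt_of_lt_of_le hx0 hy.1
      have hy1 : y < 1 := by have := hy.2; linarith
      exact (hasDerivAt_F y hy0 hy1).continuousAt.continuousWithinAt
    · intro y hy
      rw [interior_Icc] at hy
      have hy0 : 0 < y := lt_trans hx0 hy.1
      have hy2 : y < 1/2 := hy.2
      have hy1 : y < 1 := by linarith
      rw [(hasDerivAt_F y hy0 hy1).deriv]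
      have hH := Hpos y hy0 hy2
      have hne1 : (1:ℝ) - y ≠ 0 := by linarith
      have key : y⁻¹ * Real.log (1 - y) + Real.log y * (-(1 - y)⁻¹)
          = ((1 - y) * Real.log (1 - y) - y * Real.log y) / (y * (1 - y)) := by
        field_simp
        ring
      rw [key]
      apply div_pos hH (by nlinarith)
  have hx12 : x ∈ Icc x (1/2) := ⟨le_refl _, le_of_lt hx2⟩
  have h12 : (1:ℝ)/2 ∈ Icc x (1/2) := ⟨le_of_lt hx2, le_refl _⟩
  have := hmono hx12 h12 hx2
  simp only at this
  have hval : Real.log ((1:ℝ)/2) * Real.log (1 - 1/2) = (Real.log 2) ^ 2 := by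
    rw [show (1:ℝ) - 1/2 = 1/2 by norm_num, show (1:ℝ)/2 = 2⁻¹ by norm_num,
      Real.log_inv]
    ring
  rw [hval] at this
  exact this

private lemma F_le (x : ℝ) (hx0 : 0 < x) (hx1 : x < 1) :
    Real.log x * Real.log (1 - x) ≤ (Real.log 2) ^ 2 ∧
      (Real.log x * Real.log (1 - x) = (Real.log 2) ^ 2 ↔ x = 1/2) := by
  rcases lt_trichotomy x (1/2) with h | h | h
  · have := F_lt x hx0 h
    exact ⟨le_of_lt this, by constructor <;> intro he <;> [linarith; linarith]⟩
  · subst h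
    have hval : Real.log ((1:ℝ)/2) * Real.log (1 - 1/2) = (Real.log 2) ^ 2 := by
      rw [show (1:ℝ) - 1/2 = 1/2 by norm_num, show (1:ℝ)/2 = 2⁻¹ by norm_num,
        Real.log_inv]
      ring
    exact ⟨le_of_eq hval, ⟨fun _ => rfl, fun _ => hval⟩⟩
  · have h0 : 0 < 1 - x := by linarith
    have h2 : 1 - x < 1/2 := by linarith
    have := F_lt (1 - x) h0 h2
    rw [show (1:ℝ) - (1 - x) = x by ring] at this
    rw [mul_comm] at this
    exact ⟨le_of_lt this, by constructor <;> intro he <;> [linarith; linarith]⟩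

theorem nu_log_min (ν : ℝ) (hν : 0 < ν) :
    ν * Real.log (1 - Real.exp (-ν)) ≥ -(Real.log 2) ^ 2 ∧
      (ν * Real.log (1 - Real.exp (-ν)) = -(Real.log 2) ^ 2 ↔ ν = Real.log 2) := by
  set x := Real.exp (-ν) with hxdef
  have hx0 : 0 < x := Real.exp_pos _
  have hx1 : x < 1 := by
    rw [hxdef]
    exact Real.exp_lt_one_iff.mpr (by linarith)
  have hlogx : Real.log x = -ν := Real.log_exp _
  obtain ⟨hle, hiff⟩ := F_le x hx0 hx1
  have hrw : ν * Real.log (1 - x) = -(Real.log x * Real.log (1 - x)) := by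
    rw [hlogx]; ring
  constructor
  · rw [hrw]; linarith
  · rw [hrw]
    constructor
    · intro he
      have : Real.log x * Real.log (1 - x) = (Real.log 2) ^ 2 := by linarith
      have hx : x = 1/2 := hiff.mp this
      have : -ν = Real.log (1/2) := by
        rw [← hlogx, hx]
      rw [show (1:ℝ)/2 = 2⁻¹ by norm_num, Real.log_inv] at this
      linarith
    · intro he
      have hx : x = 1/2 := by
        rw [hxdef, he, show (1:ℝ)/2 = 2⁻¹ by norm_num, ← Real.log_inv,
          Real.exp_log (by norm_num)]
      have := hiff.mpr hx
      linarith
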